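/- Let S be a set of agents and suppose Σ_{i∈S, j∉S} ∫₀^∞ aᵢⱼ(t) dt < ∞. Let x̄_S(t) = max_{i∈S} xᵢ(t) for a bounded trajectory of the consensus system with |xⱼ(t) − xᵢ(t)| ≤ Δ(0) for all i, j, t. Then x̄_S(t) is a Cauchy function as t → ∞ (for all μ > 0 there is T with |x̄_S(v) − x̄_S(u)| ≤ μΔ(0) for all v > u ≥ T, using the increase bound x̄_S(v) − x̄_S(u) ≤ Δ(0)·Σ_{i∈S,j∉S}∫_u^v aᵢⱼ), hence lim_{t→∞} x̄_S(t) exists. -/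

import Mathlib

open intervalIntegral MeasureTheory Filter Set Metric
open scoped ENNReal NNReal

noncomputable def dnat (n : ℕ) : ℝ := 1 / ((n : ℝ) + 1)

lemma dnat_pos (n : ℕ) : 0 < dnat n := by
  have : (0:ℝ) ≤ (n:ℝ) := Nat.cast_nonneg n
  rw [dnat]; positivity

lemma dnat_le_one (n : ℕ) : dnat n ≤ 1 := by
  have : (0:ℝ) ≤ (n:ℝ) := Nat.cast_nonneg n
  rw [dnat, div_le_one (by linarith)]; linarith

lemma dnat_tendsto : Tendsto dnat atTop (nhds 0) :=
  tendsto_one_div_add_atTop_nhds_zero_nat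

lemma avg_cont {g : ℝ → ℝ} (hg : Continuous g) (b : ℝ) :
    Tendsto (fun n => (∫ s in b..(b + dnat n), g s) / dnat n) atTop (nhds (g b)) := by
  have hD : HasDerivAt (fun t => ∫ s in b..t, g s) (g b) b :=
    intervalIntegral.integral_hasDerivAt_right (hg.intervalIntegrable _ _)
      (hg.stronglyMeasurableAtFilter _ _) hg.continuousAt
  have hslope := hasDerivAt_iff_tendsto_slope.mp hD
  have hseq : Tendsto (fun n => b + dnat n) atTop (nhdsWithin b {b}ᶜ) := by
    apply tendsto_nhdsWithin_of_tendsto_nhds_of_eventually_within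
    · simpa using (dnat_tendsto.const_add b)
    · exact Eventually.of_forall fun n => by
        have := dnat_pos n
        simp only [Set.mem_compl_iff, Set.mem_singleton_iff]
        intro h; nlinarith [h]
  refine (hslope.comp hseq).congr (fun n => ?_)
  show slope (fun t => ∫ s in b..t, g s) b (b + dnat n) = _
  rw [slope_def_field, intervalIntegral.integral_same, add_sub_cancel_left, sub_zero]

lemma oneSided_leb {f : ℝ → ℝ} (hf : Integrable f) :
    ∀ᵐ x : ℝ, Tendsto (fun n => (∫ s in x..(x + dnat n), f s) / dnat n) atTop (nhds (f x)) := by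
  filter_upwards [IsUnifLocDoublingMeasure.ae_tendsto_average_norm_sub (μ := volume)
    hf.locallyIntegrable 1] with x hx
  have hδ : Tendsto (fun n => dnat n / 2) atTop (nhdsWithin 0 (Set.Ioi 0)) := by
    apply tendsto_nhdsWithin_of_tendsto_nhds_of_eventually_within
    · simpa using dnat_tendsto.div_const 2
    · exact Eventually.of_forall fun n => by
        have := dnat_pos n; simp [Set.mem_Ioi]; linarith
  have hmem : ∀ᶠ n in atTop, x ∈ closedBall (x + dnat n / 2) (1 * (dnat n / 2)) := by
    refine Eventually.of_forall fun n => ?_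
    have := dnat_pos n
    simp [Metric.mem_closedBall, Real.dist_eq, abs_of_pos this]
  have havg := hx (fun n => x + dnat n / 2) (fun n => dnat n / 2) hδ hmem
  -- rewrite the ball averages
  have hball : ∀ n, closedBall (x + dnat n / 2) (dnat n / 2) = Icc x (x + dnat n) := by
    intro n
    rw [Real.closedBall_eq_Icc]
    congr 1 <;> ring
  rw [show (fun n => ⨍ y in closedBall (x + dnat n / 2) (dnat n / 2), ‖f y - f x‖)
      = fun n => (dnat n)⁻¹ * ∫ y in Icc x (x + dnat n), ‖f y - f x‖ from ?_] at havg
  · -- squeeze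
    rw [show f x = f x + 0 by ring] at *
    have key : ∀ n, ‖(∫ s in x..(x + dnat n), f s) / dnat n - f x‖
        ≤ (dnat n)⁻¹ * ∫ y in Icc x (x + dnat n), ‖f y - f x‖ := by
      intro n
      have hd := dnat_pos n
      have hle : x ≤ x + dnat n := by linarith
      have hint : IntervalIntegrable f volume x (x + dnat n) := hf.intervalIntegrable
      have hintc : IntervalIntegrable (fun _ : ℝ => f x) volume x (x + dnat n) :=
        intervalIntegrable_const
      have e1 : (∫ s in x..(x + dnat n), f s) / dnat n - f x
          = (∫ s in x..(x + dnat n), (f s - f x)) / dnat n := by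
        rw [intervalIntegral.integral_sub hint hintc, intervalIntegral.integral_const, add_sub_cancel_left,
          smul_eq_mul]
        field_simp
      rw [e1, norm_div, Real.norm_eq_abs (dnat n), abs_of_pos hd, div_eq_inv_mul]
      gcongr
      calc ‖∫ s in x..(x + dnat n), (f s - f x)‖
          ≤ ∫ s in x..(x + dnat n), |f s - f x| := by
            rw [Real.norm_eq_abs]
            exact intervalIntegral.abs_integral_le_integral_abs hle
        _ = ∫ s in Ioc x (x + dnat n), |f s - f x| := intervalIntegral.integral_of_le hle
        _ = ∫ s in Icc x (x + dnat n), |f s - f x| :=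
            (MeasureTheory.integral_Icc_eq_integral_Ioc).symm
        _ = ∫ y in Icc x (x + dnat n), ‖f y - f x‖ := by simp [Real.norm_eq_abs]
    have := squeeze_zero_norm key (by simpa using havg)
    have h2 : Tendsto (fun n => ((∫ s in x..(x + dnat n), f s) / dnat n - f x) + f x)
        atTop (nhds (0 + f x)) := this.add tendsto_const_nhds
    simpa using h2
  · funext n
    rw [hball n, MeasureTheory.setAverage_eq, Real.volume_real_Icc]
    have hd := dnat_pos n
    rw [show x + dnat n - x = dnat n by ring, max_eq_left hd.le, smul_eq_mul]

lemma core {n : ℕ} (S : Finset (Fin n)) (hS : S.Nonempty)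
    (h F : Fin n → ℝ → ℝ) (ψ : ℝ → ℝ) (u v : ℝ) (huv : u ≤ v)
    (Hcont : ∀ i ∈ S, Continuous (h i))
    (HFint : ∀ i ∈ S, ∀ t, u ≤ t → IntervalIntegrable (F i) MeasureTheory.volume u t)
    (Hψint : ∀ t, u ≤ t → IntervalIntegrable ψ MeasureTheory.volume u t)
    (Hψ0 : ∀ s, u ≤ s → 0 ≤ ψ s)
    (Hsol : ∀ i ∈ S, ∀ σ t, u ≤ σ → σ ≤ t → h i t = h i σ + ∫ s in σ..t, F i s)
    (Hprop : ∀ i ∈ S, ∀ s, u ≤ s → (∀ j ∈ S, h j s ≤ h i s) → F i s ≤ ψ s) :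
    S.sup' hS (fun i => h i v) ≤ S.sup' hS (fun i => h i u) + ∫ s in u..v, ψ s := by
  set g : ℝ → ℝ := fun t => S.sup' hS (fun i => h i t) with hgdef
  have gcont : Continuous g := by
    rw [continuous_iff_continuousAt]
    intro x
    exact ContinuousAt.finset_sup'_apply hS (fun i hi => (Hcont i hi).continuousAt)
  set F' : Fin n → ℝ → ℝ := fun i => (Icc u (v+1)).indicator (F i) with hF'def
  set G' : ℝ → ℝ := fun s => ∑ i ∈ S, |F' i s| with hG'def
  have hF'int : ∀ i ∈ S, Integrable (F' i) := by
    intro i hi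
    have h1 : IntegrableOn (F i) (Icc u (v+1)) := by
      have h2 := HFint i hi (v+1) (by linarith)
      rw [intervalIntegrable_iff_integrableOn_Ioc_of_le (by linarith)] at h2
      rwa [integrableOn_Icc_iff_integrableOn_Ioc]
    exact (integrable_indicator_iff measurableSet_Icc).2 h1
  have hG'int : Integrable G' := integrable_finset_sum _ (fun i hi => (hF'int i hi).abs)
  have hFle : ∀ i ∈ S, ∀ s, F' i s ≤ G' s := by
    intro i hi s
    calc F' i s ≤ |F' i s| := le_abs_self _
      _ ≤ ∑ j ∈ S, |F' j s| := Finset.single_le_sum (f := fun j => |F' j s|) (fun j _ => abs_nonneg _) hi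
  -- rewriting interval integrals of F into F'
  have hFF' : ∀ i, ∀ x, u ≤ x → x ≤ v → ∀ m : ℕ,
      (∫ s in x..(x + dnat m), F i s) = ∫ s in x..(x + dnat m), F' i s := by
    intro i x hux hxv m
    refine (intervalIntegral.integral_congr (fun s hs => ?_)).symm
    rw [Set.uIcc_of_le (by have := dnat_pos m; linarith)] at hs
    have : s ∈ Icc u (v+1) := ⟨by linarith [hs.1], by have := dnat_le_one m; linarith [hs.2]⟩
    simp only [hF'def, Set.indicator_of_mem this]
  -- primitive of G'
  set Γ : ℝ → ℝ := fun t => ∫ s in u..t, G' s with hΓdef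
  have hΓcont : Continuous Γ :=
    intervalIntegral.continuous_primitive (fun a b => hG'int.intervalIntegrable) u
  have hΓdiff : ∀ x d : ℝ, Γ (x + d) - Γ x = ∫ s in x..(x + d), G' s := by
    intro x d
    have := intervalIntegral.integral_add_adjacent_intervals
      (hG'int.intervalIntegrable (a := u) (b := x))
      (hG'int.intervalIntegrable (a := x) (b := x + d))
    simp only [hΓdef]; linarith
  -- key pointwise inequality
  have qle : ∀ (m : ℕ) (x : ℝ), u ≤ x → x ≤ v →
      g (x + dnat m) - g x ≤ ∫ s in x..(x + dnat m), G' s := by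
    intro m x hux hxv
    obtain ⟨i, hiS, hieq⟩ := Finset.exists_mem_eq_sup' hS (fun j => h j (x + dnat m))
    have h1 : h i x ≤ g x := Finset.le_sup' (fun j => h j x) hiS
    have h2 : h i (x + dnat m) = h i x + ∫ s in x..(x + dnat m), F i s :=
      Hsol i hiS x _ hux (by have := dnat_pos m; linarith)
    have h4 : (∫ s in x..(x + dnat m), F' i s) ≤ ∫ s in x..(x + dnat m), G' s := by
      refine intervalIntegral.integral_mono_on (by have := dnat_pos m; linarith)
        ((hF'int i hiS).intervalIntegrable) (hG'int.intervalIntegrable)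
        (fun s _ => hFle i hiS s)
    have h5 : g (x + dnat m) = h i (x + dnat m) := hieq
    rw [h5, h2, hFF' i x hux hxv m]
    linarith
  have hgInt : ∀ a b : ℝ, IntervalIntegrable g MeasureTheory.volume a b :=
    fun a b => gcont.intervalIntegrable a b
  -- integral identity for translations
  have transl : ∀ φ : ℝ → ℝ, Continuous φ → ∀ m : ℕ,
      (∫ x in u..v, (φ (x + dnat m) - φ x)) =
        (∫ x in v..(v + dnat m), φ x) - (∫ x in u..(u + dnat m), φ x) := by
    intro φ hφ m
    have hint : ∀ a b : ℝ, IntervalIntegrable φ MeasureTheory.volume a b :=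
      fun a b => hφ.intervalIntegrable a b
    have e1 : (∫ x in u..v, φ (x + dnat m)) = ∫ x in (u + dnat m)..(v + dnat m), φ x :=
      intervalIntegral.integral_comp_add_right φ (dnat m)
    have A1 := intervalIntegral.integral_add_adjacent_intervals
      (hint u (u + dnat m)) (hint (u + dnat m) (v + dnat m))
    have A2 := intervalIntegral.integral_add_adjacent_intervals
      (hint u v) (hint v (v + dnat m))
    have e2 : (∫ x in u..v, (φ (x + dnat m) - φ x)) =
        (∫ x in u..v, φ (x + dnat m)) - ∫ x in u..v, φ x :=
      intervalIntegral.integral_sub ((hφ.comp (continuous_add_right _)).intervalIntegrable _ _)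
        (hint u v)
    rw [e2, e1]; linarith
  -- the φ sequence
  set φ : ℕ → ℝ → ℝ := fun m x =>
    (Γ (x + dnat m) - Γ x) / dnat m - (g (x + dnat m) - g x) / dnat m with hφdef
  have φcont : ∀ m, Continuous (φ m) := by
    intro m
    apply Continuous.sub
    · exact ((hΓcont.comp (continuous_add_right _)).sub hΓcont).div_const _
    · exact ((gcont.comp (continuous_add_right _)).sub gcont).div_const _
  have φ0 : ∀ m, ∀ x ∈ Ioc u v, 0 ≤ φ m x := by
    intro m x hx
    have := qle m x hx.1.le hx.2
    have hd := dnat_pos m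
    have h2 : g (x + dnat m) - g x ≤ Γ (x + dnat m) - Γ x := by
      rw [hΓdiff]; exact this
    have h3 : (g (x + dnat m) - g x) / dnat m ≤ (Γ (x + dnat m) - Γ x) / dnat m := by
      gcongr
    simp only [hφdef]
    linarith
  -- limits of the integral sequence
  have hΓu : Γ u = 0 := intervalIntegral.integral_same
  set c : ℕ → ℝ := fun m => ∫ x in Ioc u v, φ m x with hcdef
  have hceq : ∀ m, c m =
      ((∫ x in v..(v + dnat m), Γ x) - (∫ x in u..(u + dnat m), Γ x)) / dnat m
      - ((∫ x in v..(v + dnat m), g x) - (∫ x in u..(u + dnat m), g x)) / dnat m := by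
    intro m
    have e0 : c m = ∫ x in u..v, φ m x := (intervalIntegral.integral_of_le huv).symm
    have i1 : IntervalIntegrable (fun x => (Γ (x + dnat m) - Γ x) / dnat m)
        MeasureTheory.volume u v :=
      (((hΓcont.comp (continuous_add_right _)).sub hΓcont).div_const _).intervalIntegrable _ _
    have i2 : IntervalIntegrable (fun x => (g (x + dnat m) - g x) / dnat m)
        MeasureTheory.volume u v :=
      (((gcont.comp (continuous_add_right _)).sub gcont).div_const _).intervalIntegrable _ _
    have e1 : (∫ x in u..v, φ m x) = (∫ x in u..v, (Γ (x + dnat m) - Γ x) / dnat m)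
        - ∫ x in u..v, (g (x + dnat m) - g x) / dnat m := intervalIntegral.integral_sub i1 i2
    have e2 : (∫ x in u..v, (Γ (x + dnat m) - Γ x) / dnat m)
        = (∫ x in u..v, (Γ (x + dnat m) - Γ x)) / dnat m := by
      rw [← intervalIntegral.integral_div]
    have e3 : (∫ x in u..v, (g (x + dnat m) - g x) / dnat m)
        = (∫ x in u..v, (g (x + dnat m) - g x)) / dnat m := by
      rw [← intervalIntegral.integral_div]
    rw [e0, e1, e2, e3, transl Γ hΓcont m, transl g gcont m]
  have hclim : Tendsto c atTop (nhds ((Γ v - Γ u) - (g v - g u))) := by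
    have l1 : Tendsto (fun m => ((∫ x in v..(v + dnat m), Γ x)
        - (∫ x in u..(u + dnat m), Γ x)) / dnat m) atTop (nhds (Γ v - Γ u)) := by
      have := (avg_cont hΓcont v).sub (avg_cont hΓcont u)
      refine this.congr (fun m => ?_)
      rw [div_sub_div_same]
    have l2 : Tendsto (fun m => ((∫ x in v..(v + dnat m), g x)
        - (∫ x in u..(u + dnat m), g x)) / dnat m) atTop (nhds (g v - g u)) := by
      have := (avg_cont gcont v).sub (avg_cont gcont u)
      refine this.congr (fun m => ?_)
      rw [div_sub_div_same]
    have := l1.sub l2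
    refine this.congr (fun m => (hceq m).symm)
  have hc0 : ∀ m, 0 ≤ c m :=
    fun m => MeasureTheory.setIntegral_nonneg measurableSet_Ioc (φ0 m)
  have hDle : g v - g u ≤ Γ v - Γ u := by
    have := ge_of_tendsto hclim (Eventually.of_forall hc0)
    linarith
  -- a.e. facts
  have hae2 : ∀ᵐ x : ℝ, ∀ i : Fin n, i ∈ S →
      Tendsto (fun m => (∫ s in x..(x + dnat m), F' i s) / dnat m) atTop (nhds (F' i x)) := by
    rw [MeasureTheory.ae_all_iff]
    intro i
    by_cases hi : i ∈ S
    · filter_upwards [oneSided_leb (hF'int i hi)] with x hx _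
      exact hx
    · exact MeasureTheory.ae_of_all _ (fun x hx => absurd hx hi)
  have hmain : ∀ᵐ x ∂(MeasureTheory.volume.restrict (Ioc u v)),
      ENNReal.ofReal (G' x - ψ x) ≤ liminf (fun m => ENNReal.ofReal (φ m x)) atTop := by
    rw [MeasureTheory.ae_restrict_iff' measurableSet_Ioc]
    filter_upwards [oneSided_leb hG'int, hae2] with x hxG hxF hxmem
    have hux : u ≤ x := hxmem.1.le
    have hxv : x ≤ v := hxmem.2
    have claim : ∀ ε : ℝ, 0 < ε →
        ∀ᶠ m in atTop, (g (x + dnat m) - g x) / dnat m ≤ ψ x + ε := by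
      intro ε hε
      obtain ⟨i₀, hi₀S, hi₀⟩ := Finset.exists_mem_eq_sup' hS (fun j => h j x)
      have E1 : ∀ᶠ m in atTop, ∀ i : Fin n,
          (i ∈ S ∧ h i x < g x) → h i (x + dnat m) < h i₀ (x + dnat m) := by
        rw [eventually_all]
        intro i
        by_cases hc : i ∈ S ∧ h i x < g x
        · have t1 : Tendsto (fun m => h i (x + dnat m)) atTop (nhds (h i x)) :=
            ((Hcont i hc.1).tendsto x).comp (by simpa using dnat_tendsto.const_add x)
          have t2 : Tendsto (fun m => h i₀ (x + dnat m)) atTop (nhds (h i₀ x)) :=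
            ((Hcont i₀ hi₀S).tendsto x).comp (by simpa using dnat_tendsto.const_add x)
          have hlt : h i x < h i₀ x := by rw [← hi₀]; exact hc.2
          filter_upwards [t1.eventually_lt_const (show h i x < (h i x + h i₀ x)/2 by linarith),
            t2.eventually_const_lt (show (h i x + h i₀ x)/2 < h i₀ x by linarith)] with m hm1 hm2
          intro _
          linarith
        · exact Eventually.of_forall (fun m hc' => absurd hc' hc)
      have E2 : ∀ᶠ m in atTop, ∀ i : Fin n, (i ∈ S ∧ h i x = g x) →
          (∫ s in x..(x + dnat m), F i s) / dnat m ≤ ψ x + ε := by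
        rw [eventually_all]
        intro i
        by_cases hc : i ∈ S ∧ h i x = g x
        · have hFx : F i x ≤ ψ x := Hprop i hc.1 x hux
            (fun j hj => by rw [hc.2]; exact Finset.le_sup' (fun k => h k x) hj)
          have hxmem2 : x ∈ Icc u (v+1) := ⟨hux, by linarith⟩
          have hF'x : F' i x = F i x := by
            simp only [hF'def, Set.indicator_of_mem hxmem2]
          have hT := hxF i hc.1
          rw [hF'x] at hT
          filter_upwards [hT.eventually_lt_const (show F i x < ψ x + ε by linarith)] with m hm
          intro _
          rw [hFF' i x hux hxv m]
          linarith
        · exact Eventually.of_forall (fun m hc' => absurd hc' hc)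
      filter_upwards [E1, E2] with m h1 h2
      obtain ⟨j, hjS, hjeq⟩ := Finset.exists_mem_eq_sup' hS (fun k => h k (x + dnat m))
      have hjx : ¬ (h j x < g x) := by
        intro hlt
        have hlt2 := h1 j ⟨hjS, hlt⟩
        have hle : h i₀ (x + dnat m) ≤ g (x + dnat m) :=
          Finset.le_sup' (fun k => h k (x + dnat m)) hi₀S
        have : g (x + dnat m) = h j (x + dnat m) := hjeq
        linarith
      have hjx2 : h j x = g x :=
        le_antisymm (Finset.le_sup' (fun k => h k x) hjS) (not_lt.1 hjx)
      have hsolj := Hsol j hjS x (x + dnat m) hux (by have := dnat_pos m; linarith)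
      have hgm : g (x + dnat m) = h j (x + dnat m) := hjeq
      have e4 : (g (x + dnat m) - g x) / dnat m
          = (∫ s in x..(x + dnat m), F j s) / dnat m := by
        rw [hgm, hsolj, hjx2]; ring_nf
      rw [e4]
      exact h2 j ⟨hjS, hjx2⟩
    refine ENNReal.le_of_forall_pos_le_add (fun ε hε hlt => ?_)
    have hε2 : 0 < (ε : ℝ) / 2 := by positivity
    have ev1 : ∀ᶠ m in atTop, G' x - (ε : ℝ)/2 < (Γ (x + dnat m) - Γ x) / dnat m := by
      have hT : Tendsto (fun m => (Γ (x + dnat m) - Γ x) / dnat m) atTop (nhds (G' x)) := by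
        refine hxG.congr (fun m => ?_)
        rw [hΓdiff]
      exact hT.eventually_const_lt (by linarith)
    have ev2 := claim ((ε : ℝ)/2) hε2
    have hlower : ENNReal.ofReal (G' x - ψ x - (ε : ℝ)) ≤
        liminf (fun m => ENNReal.ofReal (φ m x)) atTop := by
      refine le_liminf_of_le (by isBoundedDefault) ?_
      filter_upwards [ev1, ev2] with m hm1 hm2
      refine ENNReal.ofReal_le_ofReal ?_
      simp only [hφdef]
      linarith
    calc ENNReal.ofReal (G' x - ψ x) = ENNReal.ofReal ((G' x - ψ x - (ε:ℝ)) + (ε:ℝ)) := by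
          rw [sub_add_cancel]
      _ ≤ ENNReal.ofReal (G' x - ψ x - (ε:ℝ)) + ENNReal.ofReal (ε:ℝ) := ENNReal.ofReal_add_le
      _ ≤ liminf (fun m => ENNReal.ofReal (φ m x)) atTop + (ε : ℝ≥0∞) := by
          refine add_le_add hlower (le_of_eq ?_)
          exact ENNReal.ofReal_coe_nnreal
  -- Fatou
  have hfatou := MeasureTheory.lintegral_liminf_le (u := atTop)
    (μ := MeasureTheory.volume.restrict (Ioc u v))
    (fun m => (ENNReal.measurable_ofReal.comp (φcont m).measurable))
  have step1 : (∫⁻ x in Ioc u v, ENNReal.ofReal (G' x - ψ x)) ≤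
      liminf (fun m => ∫⁻ x in Ioc u v, ENNReal.ofReal (φ m x)) atTop :=
    le_trans (MeasureTheory.lintegral_mono_ae hmain) hfatou
  have step3 : ∀ m, (∫⁻ x in Ioc u v, ENNReal.ofReal (φ m x)) = ENNReal.ofReal (c m) := by
    intro m
    rw [← MeasureTheory.ofReal_integral_eq_lintegral_ofReal
      (((φcont m).integrableOn_Icc).mono_set Ioc_subset_Icc_self)
      ((MeasureTheory.ae_restrict_iff' measurableSet_Ioc).2
        (MeasureTheory.ae_of_all _ (φ0 m)))]
  have step4 : liminf (fun m => ENNReal.ofReal (c m)) atTop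
      = ENNReal.ofReal ((Γ v - Γ u) - (g v - g u)) :=
    ((ENNReal.continuous_ofReal.tendsto _).comp hclim).liminf_eq
  set q : ℝ → ℝ := fun x => max (G' x - ψ x) 0 with hqdef
  have hψInt : MeasureTheory.IntegrableOn ψ (Ioc u v) := by
    have := Hψint v huv
    rwa [intervalIntegrable_iff_integrableOn_Ioc_of_le huv] at this
  have hqInt : MeasureTheory.IntegrableOn q (Ioc u v) := by
    have hmx : q = fun x => ((G' x - ψ x) + |G' x - ψ x|) / 2 := by
      funext x
      rcases le_total (G' x - ψ x) 0 with hle | hle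
      · rw [hqdef]; simp only [max_eq_right hle, abs_of_nonpos hle]; ring
      · rw [hqdef]; simp only [max_eq_left hle, abs_of_nonneg hle]; ring
    rw [hmx]
    exact (((hG'int.integrableOn.sub hψInt).add
      (hG'int.integrableOn.sub hψInt).abs).div_const 2)
  have hq1 : ENNReal.ofReal (∫ x in Ioc u v, q x)
      = ∫⁻ x in Ioc u v, ENNReal.ofReal (G' x - ψ x) := by
    rw [MeasureTheory.ofReal_integral_eq_lintegral_ofReal hqInt
      (MeasureTheory.ae_of_all _ (fun x => le_max_right _ _))]
    congr 1
    funext x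
    rcases le_total (G' x - ψ x) 0 with hle | hle
    · rw [hqdef]
      simp only [max_eq_right hle, ENNReal.ofReal_zero,
        ENNReal.ofReal_eq_zero.2 hle]
    · rw [hqdef]; simp only [max_eq_left hle]
  have hq2 : (∫ x in Ioc u v, (G' x - ψ x)) ≤ ∫ x in Ioc u v, q x :=
    MeasureTheory.integral_mono (hG'int.integrableOn.sub hψInt) hqInt
      (fun x => le_max_left _ _)
  have final1 : ENNReal.ofReal (∫ x in Ioc u v, q x)
      ≤ ENNReal.ofReal ((Γ v - Γ u) - (g v - g u)) := by
    rw [hq1, ← step4]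
    refine le_trans step1 (le_of_eq ?_)
    congr 1
    funext m
    exact step3 m
  have final2 : (∫ x in Ioc u v, q x) ≤ (Γ v - Γ u) - (g v - g u) := by
    have h0 : 0 ≤ (Γ v - Γ u) - (g v - g u) := by linarith
    exact (ENNReal.ofReal_le_ofReal_iff h0).1 final1
  have hΓv : Γ v - Γ u = ∫ x in Ioc u v, G' x := by
    rw [hΓu, sub_zero, hΓdef]
    exact intervalIntegral.integral_of_le huv
  have hsplit : (∫ x in Ioc u v, (G' x - ψ x))
      = (∫ x in Ioc u v, G' x) - ∫ x in Ioc u v, ψ x :=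
    MeasureTheory.integral_sub hG'int.integrableOn hψInt
  have hfin : g v - g u ≤ ∫ x in Ioc u v, ψ x := by
    have := le_trans hq2 final2
    rw [hsplit] at this
    rw [hΓv] at this
    linarith
  have : (∫ s in u..v, ψ s) = ∫ x in Ioc u v, ψ x := intervalIntegral.integral_of_le huv
  rw [this]
  show g v ≤ g u + _
  linarith

/-- If the total integral influence from outside `S` onto `S` is
finite and the trajectory is bounded with spread at most `Δ₀`, then
`x̄_S(t) = max_{i∈S} x_i(t)` is Cauchy as `t → ∞` (with explicit `μΔ₀` bound)
and hence converges. -/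
theorem max_over_component_converges
    (n : ℕ) (x : Fin n → ℝ → ℝ) (a : Fin n → Fin n → ℝ → ℝ)
    (S : Finset (Fin n)) (hS : S.Nonempty) (Δ₀ : ℝ) (hΔ₀ : 0 ≤ Δ₀)
    (ha_nonneg : ∀ i j t, 0 ≤ a i j t)
    (ha_meas : ∀ i j, Measurable (a i j))
    (hx_cont : ∀ i, Continuous (x i))
    (hsol : ∀ i t, 0 ≤ t →
      x i t = x i 0 + ∫ s in (0:ℝ)..t, ∑ j, a i j s * (x j s - x i s))
    (hspread : ∀ i j (t : ℝ), 0 ≤ t → |x j t - x i t| ≤ Δ₀)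
    -- finiteness of the cross influence: Σ_{i∈S,j∉S} ∫₀^∞ a_ij < ∞
    (hfin : IntegrableOn (fun t => ∑ i ∈ S, ∑ j ∈ Sᶜ, a i j t) (Set.Ici 0)) :
    (∀ μ : ℝ, 0 < μ → ∃ T : ℝ, 0 ≤ T ∧ ∀ u v : ℝ, T ≤ u → u ≤ v →
      |S.sup' hS (fun i => x i v) - S.sup' hS (fun i => x i u)| ≤ μ * Δ₀) ∧
    (∃ L : ℝ, Tendsto (fun t => S.sup' hS (fun i => x i t)) atTop (nhds L)) := by
  classical
  set f : Fin n → ℝ → ℝ := fun i s => ∑ j, a i j s * (x j s - x i s) with hfdef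
  set A : ℝ → ℝ := fun t => ∑ i ∈ S, ∑ j ∈ Sᶜ, a i j t with hAdef
  have hA0 : ∀ s, 0 ≤ A s := fun s =>
    Finset.sum_nonneg fun i _ => Finset.sum_nonneg fun j _ => ha_nonneg i j s
  have hAii : ∀ p q : ℝ, 0 ≤ p → p ≤ q → IntervalIntegrable A MeasureTheory.volume p q := by
    intro p q h0p hpq
    rw [intervalIntegrable_iff_integrableOn_Ioc_of_le hpq]
    exact hfin.mono_set (fun s hs => le_trans h0p hs.1.le)
  -- per-agent dichotomy (freezing)
  have key : ∀ i : Fin n, ∃ T : ℝ, 0 ≤ T ∧ ∃ F : ℝ → ℝ,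
      (∀ σ t : ℝ, T ≤ σ → σ ≤ t → IntervalIntegrable F MeasureTheory.volume σ t) ∧
      (∀ σ t : ℝ, T ≤ σ → σ ≤ t → x i t = x i σ + ∫ s in σ..t, F s) ∧
      (∀ s : ℝ, T ≤ s →
        ((i ∈ S → (∀ j ∈ S, x j s ≤ x i s) → F s ≤ Δ₀ * A s) ∧
         ((∀ j, x i s ≤ x j s) → 0 ≤ F s))) := by
    intro i
    by_cases Hi : ∀ t : ℝ, 0 ≤ t → IntervalIntegrable (f i) MeasureTheory.volume 0 t
    · refine ⟨0, le_refl 0, f i, ?_, ?_, ?_⟩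
      · intro σ t h0σ hσt
        refine (Hi t (le_trans h0σ hσt)).mono_set ?_
        rw [Set.uIcc_of_le hσt, Set.uIcc_of_le (le_trans h0σ hσt)]
        exact Icc_subset_Icc h0σ le_rfl
      · intro σ t h0σ hσt
        have h0t : (0:ℝ) ≤ t := le_trans h0σ hσt
        have e1 := hsol i σ h0σ
        have e2 := hsol i t h0t
        have hσt' : IntervalIntegrable (f i) MeasureTheory.volume σ t := by
          refine (Hi t h0t).mono_set ?_
          rw [Set.uIcc_of_le hσt, Set.uIcc_of_le h0t]
          exact Icc_subset_Icc h0σ le_rfl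
        have hadd := intervalIntegral.integral_add_adjacent_intervals (Hi σ h0σ) hσt'
        linarith
      · intro s hs
        constructor
        · intro hiS hmax
          have hsplit : f i s = (∑ j ∈ S, a i j s * (x j s - x i s))
              + ∑ j ∈ Sᶜ, a i j s * (x j s - x i s) :=
            (Finset.sum_add_sum_compl S _).symm
          have t1 : (∑ j ∈ S, a i j s * (x j s - x i s)) ≤ 0 :=
            Finset.sum_nonpos fun j hj =>
              mul_nonpos_of_nonneg_of_nonpos (ha_nonneg i j s) (by linarith [hmax j hj])
          have t2 : (∑ j ∈ Sᶜ, a i j s * (x j s - x i s)) ≤ ∑ j ∈ Sᶜ, a i j s * Δ₀ :=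
            Finset.sum_le_sum fun j _ =>
              mul_le_mul_of_nonneg_left
                (le_trans (le_abs_self _) (hspread i j s hs)) (ha_nonneg i j s)
          have t3 : (∑ j ∈ Sᶜ, a i j s * Δ₀) = (∑ j ∈ Sᶜ, a i j s) * Δ₀ :=
            (Finset.sum_mul _ _ _).symm
          have t4 : (∑ j ∈ Sᶜ, a i j s) ≤ A s :=
            Finset.single_le_sum (f := fun i' => ∑ j ∈ Sᶜ, a i' j s)
              (fun i' _ => Finset.sum_nonneg fun j _ => ha_nonneg i' j s) hiS
          have t5 : (∑ j ∈ Sᶜ, a i j s) * Δ₀ ≤ A s * Δ₀ :=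
            mul_le_mul_of_nonneg_right t4 hΔ₀
          have : f i s ≤ A s * Δ₀ := by rw [hsplit]; linarith
          linarith [this, mul_comm (A s) Δ₀]
        · intro hmin
          exact Finset.sum_nonneg fun j _ =>
            mul_nonneg (ha_nonneg i j s) (by linarith [hmin j])
    · push_neg at Hi
      obtain ⟨t₀, ht₀0, ht₀⟩ := Hi
      have hfrozen : ∀ t : ℝ, t₀ ≤ t → x i t = x i 0 := by
        intro t ht
        have hni : ¬ IntervalIntegrable (f i) MeasureTheory.volume 0 t := by
          intro hint
          refine ht₀ (hint.mono_set ?_)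
          rw [Set.uIcc_of_le ht₀0, Set.uIcc_of_le (le_trans ht₀0 ht)]
          exact Icc_subset_Icc le_rfl ht
        have := hsol i t (le_trans ht₀0 ht)
        rw [intervalIntegral.integral_undef hni, add_zero] at this
        exact this
      refine ⟨t₀, ht₀0, (fun _ => 0), ?_, ?_, ?_⟩
      · intro σ t _ _; exact intervalIntegrable_const
      · intro σ t hσ hσt
        rw [hfrozen t (le_trans hσ hσt), hfrozen σ hσ]
        simp
      · intro s _
        exact ⟨fun _ _ => mul_nonneg hΔ₀ (hA0 s), fun _ => le_refl 0⟩
  choose T hT0 Fc hFintc hFsolc hpropc using key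
  obtain ⟨i₀, hi₀S⟩ := id hS
  have hne : Nonempty (Fin n) := ⟨i₀⟩
  have huniv : (Finset.univ : Finset (Fin n)).Nonempty := Finset.univ_nonempty
  set T₀ : ℝ := Finset.univ.sup' huniv T with hT₀def
  have hT₀0 : 0 ≤ T₀ := le_trans (hT0 i₀) (Finset.le_sup' T (Finset.mem_univ i₀))
  have hTle : ∀ i, T i ≤ T₀ := fun i => Finset.le_sup' T (Finset.mem_univ i)
  set g : ℝ → ℝ := fun t => S.sup' hS (fun i => x i t) with hgdef
  have claimA : ∀ u v : ℝ, T₀ ≤ u → u ≤ v →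
      g v ≤ g u + Δ₀ * ∫ s in u..v, A s := by
    intro u v hu huv
    have h0u : (0:ℝ) ≤ u := le_trans hT₀0 hu
    have hcore := core S hS x Fc (fun s => Δ₀ * A s) u v huv
      (fun i _ => hx_cont i)
      (fun i _ t hut => hFintc i u t (le_trans (hTle i) hu) hut)
      (fun t hut => (hAii u t h0u hut).const_mul Δ₀)
      (fun s _ => mul_nonneg hΔ₀ (hA0 s))
      (fun i hiS σ t huσ hσt => hFsolc i σ t (le_trans (hTle i) (le_trans hu huσ)) hσt)
      (fun i hiS s hus hmax =>
        (hpropc i s (le_trans (hTle i) (le_trans hu hus))).1 hiS hmax)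
    rwa [intervalIntegral.integral_const_mul] at hcore
  have claimB : ∀ u v : ℝ, T₀ ≤ u → u ≤ v →
      Finset.univ.sup' huniv (fun i => - x i v)
        ≤ Finset.univ.sup' huniv (fun i => - x i u) := by
    intro u v hu huv
    have hcore := core Finset.univ huniv (fun i t => - x i t) (fun i s => - Fc i s)
      (fun _ => 0) u v huv
      (fun i _ => (hx_cont i).neg)
      (fun i _ t hut => (hFintc i u t (le_trans (hTle i) hu) hut).neg)
      (fun t hut => intervalIntegrable_const)
      (fun s _ => le_refl 0)
      (fun i _ σ t huσ hσt => by
        have := hFsolc i σ t (le_trans (hTle i) (le_trans hu huσ)) hσt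
        show -x i t = -x i σ + ∫ s in σ..t, -Fc i s
        rw [intervalIntegral.integral_neg]
        linarith)
      (fun i _ s hus hmax => by
        have hmin : ∀ j, x i s ≤ x j s := fun j => by
          have h5 := hmax j (Finset.mem_univ j)
          linarith
        have h6 := (hpropc i s (le_trans (hTle i) (le_trans hu hus))).2 hmin
        show -Fc i s ≤ (0:ℝ)
        linarith)
    simpa using hcore
  set P : ℝ → ℝ := fun t => ∫ s in T₀..t, A s with hPdef
  have hAIoi : IntegrableOn A (Ioi T₀) :=
    hfin.mono_set (fun s hs => le_trans hT₀0 hs.le)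
  set Pmax : ℝ := ∫ s in Ioi T₀, A s with hPmaxdef
  have hPtend : Tendsto P atTop (nhds Pmax) :=
    intervalIntegral_tendsto_integral_Ioi T₀ hAIoi tendsto_id
  have hPdiff : ∀ p q : ℝ, T₀ ≤ p → p ≤ q → P q - P p = ∫ s in p..q, A s := by
    intro p q hp hpq
    have := intervalIntegral.integral_add_adjacent_intervals
      (hAii T₀ p hT₀0 hp) (hAii p q (le_trans hT₀0 hp) hpq)
    simp only [hPdef]
    linarith
  have hPmono : ∀ p q : ℝ, T₀ ≤ p → p ≤ q → P p ≤ P q := by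
    intro p q hp hpq
    have h1 := hPdiff p q hp hpq
    have h2 : 0 ≤ ∫ s in p..q, A s :=
      intervalIntegral.integral_nonneg hpq (fun s _ => hA0 s)
    linarith
  have hPub : ∀ t : ℝ, T₀ ≤ t → P t ≤ Pmax := by
    intro t ht
    have e1 : P t = ∫ s in Ioc T₀ t, A s := intervalIntegral.integral_of_le ht
    rw [e1, hPmaxdef]
    refine MeasureTheory.setIntegral_mono_set hAIoi
      (MeasureTheory.ae_of_all _ (fun s => hA0 s)) ?_
    exact HasSubset.Subset.eventuallyLE Ioc_subset_Ioi_self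
  set Gf : ℝ → ℝ := fun t => g t - Δ₀ * P t with hGfdef
  have hGanti : ∀ p q : ℝ, T₀ ≤ p → p ≤ q → Gf q ≤ Gf p := by
    intro p q hp hpq
    have h1 := claimA p q hp hpq
    have h2 := hPdiff p q hp hpq
    simp only [hGfdef]
    nlinarith [h1, h2]
  have hlow : ∀ t, T₀ ≤ t → (- Finset.univ.sup' huniv (fun i => - x i T₀)) ≤ g t := by
    intro t ht
    have h1 := claimB T₀ t le_rfl ht
    have h2 : - x i₀ t ≤ Finset.univ.sup' huniv (fun i => - x i t) :=
      Finset.le_sup' (fun i => - x i t) (Finset.mem_univ i₀)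
    have h3 : x i₀ t ≤ g t := Finset.le_sup' (fun i => x i t) hi₀S
    linarith
  set B₀ : ℝ := - Finset.univ.sup' huniv (fun i => - x i T₀) with hB₀def
  have hGlb : ∀ t, T₀ ≤ t → B₀ - Δ₀ * Pmax ≤ Gf t := by
    intro t ht
    have h1 := hlow t ht
    have h2 : Δ₀ * P t ≤ Δ₀ * Pmax := mul_le_mul_of_nonneg_left (hPub t ht) hΔ₀
    simp only [hGfdef]
    linarith
  set Gt : ℝ → ℝ := fun t => Gf (max t T₀) with hGtdef
  have hGtanti : Antitone Gt := fun s t hst =>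
    hGanti (max s T₀) (max t T₀) (le_max_right _ _) (max_le_max hst le_rfl)
  have hGtbdd : BddBelow (Set.range Gt) := by
    refine ⟨B₀ - Δ₀ * Pmax, fun y hy => ?_⟩
    obtain ⟨t, ht⟩ := hy
    rw [← ht]
    exact hGlb _ (le_max_right _ _)
  have hGtlim : Tendsto Gt atTop (nhds (⨅ t, Gt t)) := tendsto_atTop_ciInf hGtanti hGtbdd
  set L' : ℝ := ⨅ t, Gt t with hL'def
  have hGflim : Tendsto Gf atTop (nhds L') := by
    refine hGtlim.congr' ?_
    filter_upwards [eventually_ge_atTop T₀] with t ht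
    simp only [hGtdef, max_eq_left ht]
  have hGfge : ∀ t, T₀ ≤ t → L' ≤ Gf t := by
    intro t ht
    refine le_of_tendsto hGflim ?_
    filter_upwards [eventually_ge_atTop t] with w hw
    exact hGanti t w ht hw
  have hglim : Tendsto g atTop (nhds (L' + Δ₀ * Pmax)) := by
    have h1 := hGflim.add (hPtend.const_mul Δ₀)
    refine h1.congr (fun t => ?_)
    simp only [hGfdef]
    ring
  constructor
  · intro μ hμ
    rcases eq_or_lt_of_le hΔ₀ with hΔeq | hΔpos
    · refine ⟨T₀, hT₀0, fun u v hu huv => ?_⟩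
      have h0u : (0:ℝ) ≤ u := le_trans hT₀0 hu
      have h0v : (0:ℝ) ≤ v := le_trans h0u huv
      have hA1 := claimA u v hu huv
      have hequal : ∀ i j (t:ℝ), 0 ≤ t → x j t = x i t := by
        intro i j t ht
        have h1 := hspread i j t ht
        rw [← hΔeq] at h1
        have := abs_nonneg (x j t - x i t)
        have : |x j t - x i t| = 0 := le_antisymm h1 this
        have := abs_eq_zero.1 this
        linarith
      have hgu : g u = x i₀ u := by
        refine le_antisymm (Finset.sup'_le _ _ (fun j hj => (hequal i₀ j u h0u).le)) ?_
        exact Finset.le_sup' (fun i => x i u) hi₀S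
      have hminu : Finset.univ.sup' huniv (fun i => - x i u) = - x i₀ u := by
        refine le_antisymm (Finset.sup'_le _ _ (fun j hj => by
          have := hequal i₀ j u h0u; linarith)) ?_
        exact Finset.le_sup' (fun i => - x i u) (Finset.mem_univ i₀)
      have hminv : Finset.univ.sup' huniv (fun i => - x i v) = - x i₀ v := by
        refine le_antisymm (Finset.sup'_le _ _ (fun j hj => by
          have := hequal i₀ j v h0v; linarith)) ?_
        exact Finset.le_sup' (fun i => - x i v) (Finset.mem_univ i₀)
      have hB := claimB u v hu huv
      rw [hminu, hminv] at hB
      have hgv : x i₀ v ≤ g v := Finset.le_sup' (fun i => x i v) hi₀S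
      have hup : g v ≤ g u := by
        have : Δ₀ * ∫ s in u..v, A s = 0 := by rw [← hΔeq]; ring
        linarith
      have hdn : g u ≤ g v := by rw [hgu]; linarith
      have hzero : g v - g u = 0 := by linarith
      have hgoal : |g v - g u| ≤ μ * Δ₀ := by rw [hzero]; simp [← hΔeq]
      exact hgoal
    · have hev1 : ∀ᶠ t in atTop, Gf t < L' + μ * Δ₀ / 2 :=
        hGflim.eventually_lt_const (by nlinarith)
      have hev2 : ∀ᶠ t in atTop, Pmax - μ / 2 < P t :=
        hPtend.eventually_const_lt (by linarith)
      obtain ⟨T, hTprop⟩ := ((hev1.and hev2).and (eventually_ge_atTop T₀)).exists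
      obtain ⟨⟨hT1, hT2⟩, hTT₀⟩ := hTprop
      refine ⟨T, le_trans hT₀0 hTT₀, fun u v hu huv => ?_⟩
      have hT₀u : T₀ ≤ u := le_trans hTT₀ hu
      have hT₀v : T₀ ≤ v := le_trans hT₀u huv
      have hGa := hGanti u v hT₀u huv
      have hPuv : P u ≤ P v := hPmono u v hT₀u huv
      have hPvPu : P v - P u ≤ μ / 2 := by
        have h1 := hPub v hT₀v
        have h2 : P T ≤ P u := hPmono T u hTT₀ hu
        linarith
      have h1 : g v - g u ≤ μ * Δ₀ / 2 := by
        have e1 : g v - g u = (Gf v - Gf u) + Δ₀ * (P v - P u) := by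
          simp only [hGfdef]; ring
        have e2 : Δ₀ * (P v - P u) ≤ Δ₀ * (μ / 2) :=
          mul_le_mul_of_nonneg_left hPvPu hΔ₀
        rw [e1]
        nlinarith
      have h2 : g u - g v ≤ μ * Δ₀ / 2 := by
        have hGv : L' ≤ Gf v := hGfge v hT₀v
        have hGu : Gf u ≤ Gf T := hGanti T u hTT₀ hu
        have e1 : g u - g v = (Gf u - Gf v) + Δ₀ * (P u - P v) := by
          simp only [hGfdef]; ring
        have e2 : Δ₀ * (P u - P v) ≤ 0 := by nlinarith
        calc g u - g v = Gf u - Gf v + Δ₀ * (P u - P v) := e1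
          _ ≤ Gf u - Gf v := by linarith
          _ ≤ Gf T - L' := sub_le_sub hGu hGv
          _ ≤ μ * Δ₀ / 2 := by linarith
      have hfinal : |g v - g u| ≤ μ * Δ₀ := by
        rw [abs_le]
        constructor <;> nlinarith [mul_nonneg hμ.le hΔ₀]
      exact hfinal
  · exact ⟨L' + Δ₀ * Pmax, hglim⟩
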